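/- (Routh–Hurwitz for cubics) A monic cubic polynomial z³ + c₁z² + c₂z + c₃ with real coefficients has all roots with strictly negative real part if and only if c₁ > 0, c₃ > 0, and c₁c₂ > c₃. -/
import Mathlib

lemma cubic_has_real_root (a b c : ℝ) : ∃ r : ℝ, r^3 + a*r^2 + b*r + c = 0 := by
  set f : ℝ → ℝ := fun x => x^3 + a*x^2 + b*x + c with hf
  have hcont : Continuous f := by continuity
  set M : ℝ := 1 + |a| + |b| + |c| with hM
  have hM1 : 1 ≤ M := by
    have := abs_nonneg a; have := abs_nonneg b; have := abs_nonneg c; linarith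
  have habs : -|a| ≤ a ∧ a ≤ |a| := ⟨neg_abs_le a, le_abs_self a⟩
  have hbbs : -|b| ≤ b ∧ b ≤ |b| := ⟨neg_abs_le b, le_abs_self b⟩
  have hcbs : -|c| ≤ c ∧ c ≤ |c| := ⟨neg_abs_le c, le_abs_self c⟩
  have hMM : (0:ℝ) ≤ M^2 - M := by nlinarith
  have hfM : 0 < f M := by
    simp only [hf]
    nlinarith [mul_nonneg (abs_nonneg a) hMM, mul_nonneg (abs_nonneg b) hMM,
      mul_nonneg (abs_nonneg c) hMM, mul_le_mul_of_nonneg_right hbbs.1 (by nlinarith : (0:ℝ) ≤ M),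
      mul_le_mul_of_nonneg_right habs.1 (by nlinarith : (0:ℝ) ≤ M^2)]
  have hfmM : f (-M) < 0 := by
    simp only [hf]
    nlinarith [mul_nonneg (abs_nonneg a) hMM, mul_nonneg (abs_nonneg b) hMM,
      mul_nonneg (abs_nonneg c) hMM, mul_le_mul_of_nonneg_right hbbs.2 (by nlinarith : (0:ℝ) ≤ M),
      mul_le_mul_of_nonneg_right habs.2 (by nlinarith : (0:ℝ) ≤ M^2)]
  have hsub := intermediate_value_Icc (by linarith : -M ≤ M) hcont.continuousOn
  obtain ⟨r, _, hr⟩ := hsub (Set.mem_Icc.mpr ⟨hfmM.le, hfM.le⟩)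
  exact ⟨r, hr⟩

theorem routh_hurwitz_cubic (c₁ c₂ c₃ : ℝ) :
    (∀ z : ℂ, z ^ 3 + (c₁ : ℂ) * z ^ 2 + (c₂ : ℂ) * z + (c₃ : ℂ) = 0 → z.re < 0)
      ↔ (0 < c₁ ∧ 0 < c₃ ∧ c₃ < c₁ * c₂) := by
  constructor
  · -- forward
    intro H
    obtain ⟨r, hr⟩ := cubic_has_real_root c₁ c₂ c₃
    have hroot : (r:ℂ)^3 + (c₁:ℂ)*(r:ℂ)^2 + (c₂:ℂ)*(r:ℂ) + (c₃:ℂ) = 0 := by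
      exact_mod_cast congrArg (fun t : ℝ => (t:ℂ)) hr
    have hrneg : r < 0 := by simpa using H r hroot
    set b : ℝ := c₁ + r with hbdef
    set c : ℝ := c₂ + r*(c₁+r) with hcdef
    clear_value b c
    have hfac : ∀ z : ℂ, z^3 + (c₁:ℂ)*z^2 + (c₂:ℂ)*z + (c₃:ℂ)
        = (z - r) * (z^2 + (b:ℂ)*z + (c:ℂ)) := by
      intro z
      rw [hbdef, hcdef]
      push_cast
      linear_combination hroot
    have hbc : 0 < b ∧ 0 < c := by
      rcases lt_or_ge (b^2 - 4*c) 0 with hd | hd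
      · -- complex conjugate roots
        have hcpos : 0 < c := by nlinarith [sq_nonneg b]
        set t : ℝ := Real.sqrt (4*c - b^2) with htdef
        clear_value t
        have ht : t^2 = 4*c - b^2 := by rw [htdef]; exact Real.sq_sqrt (by linarith)
        set z : ℂ := ⟨-b/2, t/2⟩ with hzdef
        clear_value z
        have hq : z^2 + (b:ℂ)*z + (c:ℂ) = 0 := by
          rw [Complex.ext_iff]
          constructor <;>
          · simp [hzdef, pow_succ, Complex.mul_re, Complex.mul_im]
            nlinarith [ht]
        have hzroot := H z (by rw [hfac z, hq]; ring)
        have : z.re = -b/2 := by simp [hzdef]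
        rw [this] at hzroot
        exact ⟨by linarith, hcpos⟩
      · -- two real roots of quadratic
        set d : ℝ := Real.sqrt (b^2 - 4*c) with hddef
        clear_value d
        have hd2 : d^2 = b^2 - 4*c := by rw [hddef]; exact Real.sq_sqrt (by linarith)
        set s : ℝ := (-b + d)/2 with hsdef
        set u : ℝ := (-b - d)/2 with hudef
        clear_value s u
        have hs : s^2 + b*s + c = 0 := by rw [hsdef]; linear_combination hd2/4
        have hu : u^2 + b*u + c = 0 := by rw [hudef]; linear_combination hd2/4
        have hsC : (s:ℂ)^2 + (b:ℂ)*(s:ℂ) + (c:ℂ) = 0 := by exact_mod_cast hs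
        have huC : (u:ℂ)^2 + (b:ℂ)*(u:ℂ) + (c:ℂ) = 0 := by exact_mod_cast hu
        have hsneg : s < 0 := by simpa using H s (by rw [hfac s, hsC]; ring)
        have huneg : u < 0 := by simpa using H u (by rw [hfac u, huC]; ring)
        have hsum : s + u = -b := by rw [hsdef, hudef]; ring
        have hprod : s * u = c := by rw [hsdef, hudef]; linear_combination -hd2/4
        refine ⟨by linarith, ?_⟩
        rw [← hprod]; exact mul_pos_of_neg_of_neg hsneg huneg
    obtain ⟨hb, hc⟩ := hbc
    have hc1 : c₁ = b - r := by rw [hbdef]; ring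
    have hc2 : c₂ = c - r*b := by rw [hcdef, hbdef]; ring
    have hc3 : c₃ = -r*c := by rw [hcdef]; nlinarith [hr]
    refine ⟨by linarith, ?_, ?_⟩
    · rw [hc3]; exact mul_pos (by linarith) hc
    · rw [hc1, hc2, hc3]
      nlinarith [mul_pos hb hc, mul_pos (mul_pos (neg_pos.mpr hrneg) hb) hb,
        mul_pos (mul_pos (neg_pos.mpr hrneg) (neg_pos.mpr hrneg)) hb]
  · -- backward
    rintro ⟨h1, h3, h13⟩ z hz
    obtain ⟨x, y⟩ := z
    rw [Complex.ext_iff] at hz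
    obtain ⟨hre, him⟩ := hz
    simp [pow_succ, Complex.mul_re, Complex.mul_im] at hre him
    ring_nf at hre him
    show x < 0
    by_contra hx'
    push_neg at hx'
    have hc₂ : 0 < c₂ := by
      by_contra hc; push_neg at hc; nlinarith
    by_cases hy : y = 0
    · subst hy
      ring_nf at hre
      nlinarith [mul_nonneg hx' (mul_nonneg hx' hx'), mul_nonneg hx' hc₂.le,
        mul_nonneg (sq_nonneg x) h1.le]
    · have him2 : 3*x^2 - y^2 + 2*c₁*x + c₂ = 0 := by
        have h := mul_eq_zero.mp (show y * (3*x^2 - y^2 + 2*c₁*x + c₂) = 0 by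
          linear_combination him)
        tauto
      have key : c₁*c₂ - c₃ = -8*x^3 - 8*c₁*x^2 - 2*(c₂+c₁^2)*x := by
        linear_combination (-1)*hre + (3*x + c₁) * him2
      nlinarith [mul_nonneg hx' (mul_nonneg hx' hx'), mul_nonneg h1.le (sq_nonneg x),
        mul_nonneg hc₂.le hx', mul_nonneg (sq_nonneg c₁) hx']
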